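/- Let b ≥ 4 and θ ∈ ℝ. Then |Σ_{0 ≤ m < b, m ≠ a_0} e(mθ)| ≤ b − 3 + 2exp(−‖θ‖²) ≤ (b−1)·exp(−‖θ‖²/b) for any a_0 ∈ {0,…,b−1}. -/

import Mathlib

open Real

/-- `e(t) = exp(2πit)`. -/
noncomputable def e (t : ℝ) : ℂ := Complex.exp (2 * Real.pi * Complex.I * t)

/-- Distance from `x` to the nearest integer. -/
noncomputable def nint (x : ℝ) : ℝ := |x - round x|

lemma norm_e (t : ℝ) : ‖e t‖ = 1 := by
  have : (2 * Real.pi * Complex.I * t) = ((2 * Real.pi * t : ℝ) : ℂ) * Complex.I := by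
    push_cast; ring
  rw [e, this, Complex.norm_exp_ofReal_mul_I]

lemma norm_one_add_e (θ : ℝ) : ‖1 + e θ‖ = 2 * |Real.cos (π * θ)| := by
  have h1 : (2 * Real.pi * Complex.I * θ) = ((2 * π * θ : ℝ) : ℂ) * Complex.I := by
    push_cast; ring
  rw [e, h1, Complex.exp_mul_I]
  have h2 : (1 : ℂ) + (Complex.cos ((2*π*θ:ℝ):ℂ) + Complex.sin ((2*π*θ:ℝ):ℂ) * Complex.I)
      = ((1 + Real.cos (2*π*θ) : ℝ) : ℂ) + ((Real.sin (2*π*θ) : ℝ) : ℂ) * Complex.I := by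
    rw [← Complex.ofReal_cos, ← Complex.ofReal_sin]; push_cast; ring
  rw [h2, Complex.norm_add_mul_I]
  have hc : (1 + Real.cos (2*π*θ))^2 + Real.sin (2*π*θ)^2 = (2 * |Real.cos (π*θ)|)^2 := by
    have hd : Real.cos (2*π*θ) = 2 * Real.cos (π*θ)^2 - 1 := by
      have := Real.cos_two_mul (π*θ); rw [← this]; ring_nf
    have hs : Real.sin (2*π*θ)^2 = 1 - Real.cos (2*π*θ)^2 := by
      have := Real.sin_sq_add_cos_sq (2*π*θ); linarith
    rw [hs, hd, ← sq_abs (cos (π * θ))]; ring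
  rw [hc, Real.sqrt_sq (by positivity)]

lemma nint_nonneg (θ : ℝ) : 0 ≤ nint θ := abs_nonneg _

lemma nint_le_half (θ : ℝ) : nint θ ≤ 1/2 := abs_sub_round θ

lemma abs_cos_pi_eq (θ : ℝ) : |Real.cos (π * θ)| = Real.cos (π * nint θ) := by
  have hθ : π * θ = π * (θ - round θ) + (round θ : ℤ) * π := by ring
  rw [hθ, Real.cos_add_int_mul_pi, abs_mul]
  have habs : |((-1:ℝ)) ^ (round θ)| = 1 := by
    rcases Int.even_or_odd (round θ) with h | h
    · rw [h.neg_one_zpow]; simp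
    · rw [Odd.neg_one_zpow h]; simp
  rw [habs, one_mul]
  have : Real.cos (π * nint θ) = |Real.cos (π * nint θ)| := by
    rw [abs_of_nonneg]
    apply Real.cos_nonneg_of_mem_Icc
    constructor
    · nlinarith [nint_nonneg θ, Real.pi_pos]
    · nlinarith [nint_le_half θ, Real.pi_pos]
  rw [this, nint]
  rcases abs_cases (θ - round θ) with ⟨h, _⟩ | ⟨h, _⟩
  · rw [h]
  · rw [h, mul_neg, Real.cos_neg]

lemma cos_pi_le_exp {x : ℝ} (h0 : 0 ≤ x) (h1 : x ≤ 1/2) :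
    Real.cos (π * x) ≤ Real.exp (-(x^2)) := by
  have hb : Real.cos (π * x) ≤ 1 - 2 / π ^ 2 * (π * x) ^ 2 := by
    apply Real.cos_le_one_sub_mul_cos_sq
    rw [abs_of_nonneg (by positivity)]
    nlinarith [Real.pi_pos]
  have h2 : 1 - 2 / π ^ 2 * (π * x) ^ 2 = 1 - 2 * x ^ 2 := by
    field_simp
  have h3 : -(x^2) + 1 ≤ Real.exp (-(x^2)) := Real.add_one_le_exp _
  nlinarith [sq_nonneg x]

lemma pair_bound (n : ℕ) (θ : ℝ) :
    ‖e (n * θ) + e ((n + 1 : ℕ) * θ)‖ ≤ 2 * Real.exp (-(nint θ ^ 2)) := by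
  have hsplit : e ((n + 1 : ℕ) * θ) = e (n * θ) * e θ := by
    rw [e, e, e, ← Complex.exp_add]
    push_cast; ring_nf
  rw [hsplit]
  have : e (n * θ) + e (n * θ) * e θ = e (n * θ) * (1 + e θ) := by ring
  rw [this, norm_mul, norm_e, one_mul, norm_one_add_e, abs_cos_pi_eq]
  have := cos_pi_le_exp (nint_nonneg θ) (nint_le_half θ)
  linarith

/-- For `b ≥ 4` and any digit `a₀ < b`,
`|∑_{0 ≤ m < b, m ≠ a₀} e(mθ)| ≤ b − 3 + 2exp(−‖θ‖²) ≤ (b−1)·exp(−‖θ‖²/b)`. -/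
theorem restricted_digit_sum_bound (b a₀ : ℕ) (hb : 4 ≤ b) (ha₀ : a₀ < b) (θ : ℝ) :
    ‖∑ m ∈ (Finset.range b).filter (fun m => m ≠ a₀), e (m * θ)‖ ≤
        (b : ℝ) - 3 + 2 * Real.exp (-(nint θ ^ 2)) ∧
      (b : ℝ) - 3 + 2 * Real.exp (-(nint θ ^ 2)) ≤
        ((b : ℝ) - 1) * Real.exp (-(nint θ ^ 2) / b) := by
  set u : ℝ := nint θ ^ 2 with hu
  have hu0 : 0 ≤ u := sq_nonneg _
  have hu14 : u ≤ 1/4 := by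
    have h1 := nint_le_half θ
    have h0 := nint_nonneg θ
    nlinarith
  constructor
  · -- first inequality
    set S := (Finset.range b).filter (fun m => m ≠ a₀) with hS
    have hScard : S.card = b - 1 := by
      rw [hS, Finset.filter_ne', Finset.card_erase_of_mem (Finset.mem_range.mpr ha₀),
        Finset.card_range]
    obtain ⟨n, hnS⟩ : ∃ n : ℕ, n ∈ S ∧ n + 1 ∈ S := by
      have hmem : ∀ m : ℕ, m < b → m ≠ a₀ → m ∈ S := by
        intro m h1 h2
        rw [hS, Finset.mem_filter, Finset.mem_range]; exact ⟨h1, h2⟩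
      rcases le_or_gt a₀ 1 with h | h
      · exact ⟨2, hmem 2 (by omega) (by omega), hmem 3 (by omega) (by omega)⟩
      · exact ⟨0, hmem 0 (by omega) (by omega), hmem 1 (by omega) (by omega)⟩
    set T : Finset ℕ := {n, n + 1} with hT
    have hTS : T ⊆ S := by
      intro x hx
      rw [hT] at hx
      rcases Finset.mem_insert.mp hx with rfl | hx
      · exact hnS.1
      · rw [Finset.mem_singleton.mp hx]; exact hnS.2
    have hTcard : T.card = 2 := by
      rw [hT, Finset.card_insert_of_notMem (by simp), Finset.card_singleton]
    have hsum : ∑ m ∈ S, e (m * θ) =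
        (∑ m ∈ S \ T, e (m * θ)) + ∑ m ∈ T, e (m * θ) :=
      (Finset.sum_sdiff hTS).symm
    have hpairsum : ∑ m ∈ T, e (m * θ) = e (n * θ) + e ((n + 1 : ℕ) * θ) := by
      rw [hT, Finset.sum_pair (by omega)]
    have hrest : ‖∑ m ∈ S \ T, e (m * θ)‖ ≤ (b : ℝ) - 3 := by
      calc ‖∑ m ∈ S \ T, e (m * θ)‖ ≤ ∑ m ∈ S \ T, ‖e (m * θ)‖ := norm_sum_le _ _
        _ = ∑ m ∈ S \ T, (1 : ℝ) := by
          apply Finset.sum_congr rfl; intro m _; exact norm_e _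
        _ = ((S \ T).card : ℝ) := by rw [Finset.sum_const, nsmul_eq_mul, mul_one]
        _ = (b : ℝ) - 3 := by
          rw [Finset.card_sdiff_of_subset hTS, hScard, hTcard]
          have : b - 1 - 2 = b - 3 := by omega
          rw [this]
          have : (3 : ℕ) ≤ b := by omega
          push_cast [Nat.cast_sub this]
          ring
    calc ‖∑ m ∈ S, e (m * θ)‖
        ≤ ‖∑ m ∈ S \ T, e (m * θ)‖ + ‖∑ m ∈ T, e (m * θ)‖ := by
          rw [hsum]; exact norm_add_le _ _
      _ ≤ (b : ℝ) - 3 + 2 * Real.exp (-u) := by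
          rw [hpairsum]
          exact add_le_add hrest (pair_bound n θ)
  · -- second inequality
    have hexp1 : Real.exp (-u) ≤ 1 - u + u^2/2 := by
      have h1 : 1 + u + u^2/2 ≤ Real.exp u := Real.quadratic_le_exp_of_nonneg hu0
      have h2 : Real.exp (-u) * Real.exp u = 1 := by
        rw [← Real.exp_add]; simp
      have h3 : (0:ℝ) < Real.exp u := Real.exp_pos u
      nlinarith [Real.exp_pos (-u), sq_nonneg u]
    have hexp2 : 1 - u / b ≤ Real.exp (-(u / b)) := by
      have := Real.add_one_le_exp (-(u / b))
      linarith
    have hbpos : (0:ℝ) < b := by positivity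
    have hb4 : (4:ℝ) ≤ b := by exact_mod_cast hb
    have hub : 0 ≤ u / b := by positivity
    calc (b : ℝ) - 3 + 2 * Real.exp (-u)
        ≤ (b : ℝ) - 3 + 2 * (1 - u + u^2/2) := by linarith
      _ ≤ ((b : ℝ) - 1) * (1 - u / b) := by
          have key : ((b:ℝ) - 1) * (1 - u / b) = (b:ℝ) - 1 - u + u / b := by
            field_simp; ring
          rw [key]
          nlinarith
      _ ≤ ((b : ℝ) - 1) * Real.exp (-u / b) := by
          rw [neg_div]
          exact mul_le_mul_of_nonneg_left hexp2 (by linarith)
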